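/- Let Q be a set of probability densities on S (with respect to μ) such that every p ∈ Q is positive μ-almost everywhere, the uniform density u belongs to Q, Q is sequentially compact as a subset of L¹(μ), the entropy functional H is finite on Q and sequentially continuous on Q with respect to L¹(μ)-convergence, and F : Q → Q is sequentially continuous with respect to L¹(μ)-convergence and satisfies H(F(p)) ≥ H(p) for every p ∈ Q, with equality if and only if p = u μ-almost everywhere. Then for every p₁ ∈ Q, the sequence defined recursively by p_{t+1} = F(p_t) converges to u in L¹(μ). -/

import Mathlib

open MeasureTheory Real Filter

/-- `L1Tendsto μ f g` means the sequence of functions `f n` converges to `g` in `L¹(μ)`. -/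
def L1Tendsto {S : Type*} [MeasurableSpace S] (μ : Measure S)
    (f : ℕ → S → ℝ) (g : S → ℝ) : Prop :=
  Tendsto (fun n => ∫ x, |f n x - g x| ∂μ) atTop (nhds 0)

set_option maxHeartbeats 1000000 in
/-- Skew-Fit Lemma 3.1 (abstract form): if `F : Q → Q` is sequentially `L¹`-continuous,
does not decrease the entropy `H`, and increases it strictly except at the uniform density `u`,
and `Q` is sequentially compact in `L¹(μ)` with `H` finite and sequentially `L¹`-continuous on
`Q`, then the recursively defined sequence `p_{t+1} = F (p_t)` converges to `u` in `L¹(μ)`. -/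
theorem skewfit_convergence_to_uniform
    {S : Type*} [MeasurableSpace S] (μ : Measure S)
    (hμ0 : 0 < μ Set.univ) (hμfin : μ Set.univ < ⊤)
    (u : S → ℝ) (hu : u = fun _ => 1 / (μ Set.univ).toReal)
    (Q : Set (S → ℝ))
    (hQdens : ∀ p ∈ Q, Measurable p ∧ (∀ x, 0 ≤ p x) ∧ ∫ x, p x ∂μ = 1)
    (hQpos : ∀ p ∈ Q, ∀ᵐ x ∂μ, 0 < p x)
    (huQ : u ∈ Q)
    (hQcompact : ∀ f : ℕ → S → ℝ, (∀ n, f n ∈ Q) →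
      ∃ (g : S → ℝ) (φ : ℕ → ℕ), g ∈ Q ∧ StrictMono φ ∧ L1Tendsto μ (f ∘ φ) g)
    (H : (S → ℝ) → ℝ)
    (hH : H = fun p => -∫ x, p x * Real.log (p x) ∂μ)
    (hHfin : ∀ p ∈ Q, Integrable (fun x => p x * Real.log (p x)) μ)
    (hHcont : ∀ (f : ℕ → S → ℝ) (g : S → ℝ), (∀ n, f n ∈ Q) → g ∈ Q →
      L1Tendsto μ f g → Tendsto (fun n => H (f n)) atTop (nhds (H g)))
    (F : (S → ℝ) → (S → ℝ))
    (hFQ : ∀ p ∈ Q, F p ∈ Q)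
    (hFcont : ∀ (f : ℕ → S → ℝ) (g : S → ℝ), (∀ n, f n ∈ Q) → g ∈ Q →
      L1Tendsto μ f g → L1Tendsto μ (fun n => F (f n)) (F g))
    (hFincr : ∀ p ∈ Q, H p ≤ H (F p))
    (hFeq : ∀ p ∈ Q, (H (F p) = H p ↔ p =ᵐ[μ] u))
    (p₁ : S → ℝ) (hp₁ : p₁ ∈ Q)
    (seq : ℕ → S → ℝ) (hseq0 : seq 0 = p₁)
    (hseqrec : ∀ t, seq (t + 1) = F (seq t)) :
    L1Tendsto μ seq u := by
  have hseqQ : ∀ n, seq n ∈ Q := by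
    intro n
    induction n with
    | zero => rw [hseq0]; exact hp₁
    | succ k ih => rw [hseqrec]; exact hFQ _ ih
  set a : ℕ → ℝ := fun n => H (seq n) with ha
  have hmono : Monotone a := monotone_nat_of_le_succ fun n => by
    simp only [ha, hseqrec]; exact hFincr _ (hseqQ n)
  obtain ⟨g₀, φ₀, hg₀Q, hφ₀, hL1₀⟩ := hQcompact seq hseqQ
  have hsub₀ : Tendsto (fun n => a (φ₀ n)) atTop (nhds (H g₀)) :=
    hHcont _ _ (fun n => hseqQ (φ₀ n)) hg₀Q hL1₀
  obtain ⟨L, hL⟩ : ∃ L, Tendsto a atTop (nhds L) := by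
    rcases tendsto_of_monotone hmono with h | h
    · exact absurd (h.comp hφ₀.tendsto_atTop) (not_tendsto_atTop_of_tendsto_nhds hsub₀)
    · exact h
  unfold L1Tendsto
  refine Filter.tendsto_of_subseq_tendsto fun ns hns => ?_
  obtain ⟨g, φ, hgQ, hφ, hL1⟩ := hQcompact (seq ∘ ns) (fun n => hseqQ (ns n))
  have htend : Tendsto (fun n => ns (φ n)) atTop atTop := hns.comp hφ.tendsto_atTop
  have hHg : H g = L := by
    have h1 : Tendsto (fun n => a (ns (φ n))) atTop (nhds (H g)) :=
      hHcont _ _ (fun n => hseqQ (ns (φ n))) hgQ hL1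
    exact tendsto_nhds_unique h1 (hL.comp htend)
  have hHFg : H (F g) = L := by
    have hL1' : L1Tendsto μ (fun n => F (seq (ns (φ n)))) (F g) :=
      hFcont _ _ (fun n => hseqQ (ns (φ n))) hgQ hL1
    have h1 : Tendsto (fun n => H (F (seq (ns (φ n))))) atTop (nhds (H (F g))) :=
      hHcont _ _ (fun n => hFQ _ (hseqQ (ns (φ n)))) (hFQ _ hgQ) hL1'
    have h2 : Tendsto (fun n => H (F (seq (ns (φ n))))) atTop (nhds L) := by
      have heq : (fun n => H (F (seq (ns (φ n))))) = fun n => a (ns (φ n) + 1) := by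
        funext n; simp only [ha, hseqrec]
      rw [heq]
      exact hL.comp (tendsto_atTop_mono (fun n => Nat.le_add_right _ 1) htend)
    exact tendsto_nhds_unique h1 h2
  have hgu : g =ᵐ[μ] u := (hFeq g hgQ).mp (by rw [hHg, hHFg])
  refine ⟨φ, ?_⟩
  have hint : ∀ n, ∫ x, |seq (ns (φ n)) x - u x| ∂μ = ∫ x, |seq (ns (φ n)) x - g x| ∂μ := by
    intro n
    apply integral_congr_ae
    filter_upwards [hgu] with x hx
    rw [hx]
  simpa [L1Tendsto, Function.comp, hint] using hL1
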